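/- Consider the network Σ(m) of classical conditioning gates with unit training time s and arbitrary initial state X(0) = X̄ ∈ {YES, OR}^n. For every target state X* ∈ {YES, OR}^n there exist a time T ∈ {0, 1, ..., n·s} and an input sequence (U(0), U(1), ..., U(T−1)) with each U(t) ∈ {0,1}^{2n₁} such that X(T) = X*; that is, the state of the network can be steered from any value to any value. -/

import Mathlib

/-- The state of a classical conditioning gate: logical YES or logical OR. -/
inductive GateState : Type
  | YES : GateState
  | OR  : GateState
  deriving DecidableEq, Repr

/-- Output of a single classical conditioning gate:
`y = v` when the state is YES, and `y = v ∨ w` when the state is OR. -/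
def gateOut : GateState → Bool → Bool → Bool
  | GateState.YES, v, _ => v
  | GateState.OR,  v, w => v || w

open Classical in
/-- A trajectory of a single classical conditioning gate with unit training time `s`,
inputs `v w : ℕ → Bool`, state `x : ℕ → GateState`, and output `y : ℕ → Bool`:
the output equation and the state-update equation of the model. -/
def GateTraj (s : ℕ) (v w : ℕ → Bool) (x : ℕ → GateState) (y : ℕ → Bool) : Prop :=
  (∀ t : ℕ, y t = gateOut (x t) (v t) (w t)) ∧
  (∀ t : ℕ, x (t + 1) =
    if x (t + 1 - s) = GateState.YES ∧
        (∀ τ ∈ Finset.Icc (t + 1 - s) t, v τ = true ∧ w τ = true) then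
      GateState.OR
    else if x (t + 1 - s) = GateState.OR ∧
        (∀ τ ∈ Finset.Icc (t + 1 - s) t, v τ = false ∧ w τ = true) then
      GateState.YES
    else
      x t)

/-- Output of node `(i,j)` of the binary-tree network `Σ(m)` of classical
conditioning gates, given the snapshot `X` of the gate states (`X i j` is the
state of node `(i,j)`, indices 1-based) and the external input `U` (1-based
ports: `v₁ⱼ = U (2j-1)`, `w₁ⱼ = U (2j)`).  Layer `0` is, by convention, the
external ports themselves: `netY X U 0 k = U k`. -/
def netY (X : ℕ → ℕ → GateState) (U : ℕ → Bool) : ℕ → ℕ → Bool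
  | 0, j => U j
  | i + 1, j => gateOut (X (i + 1) j) (netY X U i (2 * j - 1)) (netY X U i (2 * j))

/-- First input `v_{ij}` of node `(i,j)`: the output of node `(i-1, 2j-1)`
(for `i = 1`, the external port `2j-1`). -/
def nodeV (X : ℕ → ℕ → GateState) (U : ℕ → Bool) (i j : ℕ) : Bool :=
  netY X U (i - 1) (2 * j - 1)

/-- Second input `w_{ij}` of node `(i,j)`: the output of node `(i-1, 2j)`
(for `i = 1`, the external port `2j`). -/
def nodeW (X : ℕ → ℕ → GateState) (U : ℕ → Bool) (i j : ℕ) : Bool :=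
  netY X U (i - 1) (2 * j)

open Classical in
/-- A trajectory of the network `Σ(m)` of classical conditioning gates, all with
unit training time `s`: `U t k` is the external input at time `t` on port `k`
(`k = 1, …, 2^m`), and `X t i j` is the state of node `(i,j)` at time `t`
(`i = 1, …, m`, `j = 1, …, 2^(m-i)`).  Every node obeys the state-update
equation of the classical conditioning gate, its inputs being delivered by the
outputs of the previous layer (resp. the external input, for layer 1). -/
def NetTraj (m s : ℕ) (U : ℕ → ℕ → Bool) (X : ℕ → ℕ → ℕ → GateState) : Prop :=
  ∀ i j : ℕ, 1 ≤ i → i ≤ m → 1 ≤ j → j ≤ 2 ^ (m - i) →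
    ∀ t : ℕ, X (t + 1) i j =
      if X (t + 1 - s) i j = GateState.YES ∧
          (∀ τ ∈ Finset.Icc (t + 1 - s) t,
            nodeV (X τ) (U τ) i j = true ∧ nodeW (X τ) (U τ) i j = true) then
        GateState.OR
      else if X (t + 1 - s) i j = GateState.OR ∧
          (∀ τ ∈ Finset.Icc (t + 1 - s) t,
            nodeV (X τ) (U τ) i j = false ∧ nodeW (X τ) (U τ) i j = true) then
        GateState.YES
      else
        X t i j

/-- The flipped value of a gate state. -/
def flipState : GateState → GateState
  | GateState.YES => GateState.OR
  | GateState.OR  => GateState.YES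

/-- The training input value `Û_{(p,q)}` for flipping node `(p,q)` whose current
state is `xpq`: the external input (1-based ports `1, …, 2^m`) is divided into
`2^(m+1-p)` consecutive blocks of equal size `2^(p-1)`; block `2q-1` is
`(0,…,0)` if `xpq = OR` and `(1,0,…,0)` if `xpq = YES`, block `2q` is
`(1,0,…,0)`, and all other blocks are `(0,…,0)`. -/
def Uhat (p q : ℕ) (xpq : GateState) (k : ℕ) : Bool :=
  if (k - 1) / 2 ^ (p - 1) + 1 = 2 * q - 1 then
    decide (xpq = GateState.YES) && decide ((k - 1) % 2 ^ (p - 1) = 0)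
  else if (k - 1) / 2 ^ (p - 1) + 1 = 2 * q then
    decide ((k - 1) % 2 ^ (p - 1) = 0)
  else
    false


namespace S12

lemma gateOut_ff (x : GateState) : gateOut x false false = false := by
  cases x <;> rfl

lemma gateOut_t (x : GateState) (w : Bool) : gateOut x true w = true := by
  cases x <;> simp [gateOut]

lemma netY_zero (X : ℕ → ℕ → GateState) (U : ℕ → Bool) :
    ∀ i J, 1 ≤ J → (∀ k, (J - 1) * 2 ^ i + 1 ≤ k → k ≤ J * 2 ^ i → U k = false) →
      netY X U i J = false := by
  intro i
  induction i with
  | zero =>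
    intro J hJ h
    have : U J = false := h J (by omega) (by omega)
    simpa [netY] using this
  | succ i ih =>
    intro J hJ h
    have hE : 0 < 2 ^ i := Nat.pow_pos (by norm_num)
    have e1 : (2 * J - 1 - 1) * 2 ^ i = (J - 1) * 2 ^ (i + 1) := by
      rw [show 2 * J - 1 - 1 = 2 * (J - 1) by omega, pow_succ]; ring
    have e2 : (2 * J - 1) * 2 ^ i ≤ J * 2 ^ (i + 1) := by
      rw [pow_succ, show J * (2 ^ i * 2) = (2 * J) * 2 ^ i by ring]
      exact Nat.mul_le_mul_right _ (by omega)
    have e3 : (J - 1) * 2 ^ (i + 1) + 1 ≤ (2 * J - 1) * 2 ^ i + 1 := by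
      rw [← e1]
      have : (2 * J - 1 - 1) * 2 ^ i ≤ (2 * J - 1) * 2 ^ i :=
        Nat.mul_le_mul_right _ (by omega)
      omega
    have e4 : (2 * J) * 2 ^ i = J * 2 ^ (i + 1) := by rw [pow_succ]; ring
    have hv := ih (2 * J - 1) (by omega) (fun k hk1 hk2 => h k (by omega) (by
      have := e2; omega))
    have hw := ih (2 * J) (by omega) (fun k hk1 hk2 => h k (by
      have : (2 * J - 1 - 1) * 2 ^ i ≤ (2 * J - 1) * 2 ^ i :=
        Nat.mul_le_mul_right _ (by omega)
      omega) (by omega))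
    show gateOut (X (i + 1) J) (netY X U i (2 * J - 1)) (netY X U i (2 * J)) = false
    rw [hv, hw, gateOut_ff]

lemma netY_one (X : ℕ → ℕ → GateState) (U : ℕ → Bool) :
    ∀ i J, 1 ≤ J → U ((J - 1) * 2 ^ i + 1) = true → netY X U i J = true := by
  intro i
  induction i with
  | zero =>
    intro J hJ h
    have : (J - 1) * 2 ^ 0 + 1 = J := by simp; omega
    rw [this] at h
    simpa [netY] using h
  | succ i ih =>
    intro J hJ h
    have e1 : (2 * J - 1 - 1) * 2 ^ i = (J - 1) * 2 ^ (i + 1) := by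
      rw [show 2 * J - 1 - 1 = 2 * (J - 1) by omega, pow_succ]; ring
    have hv := ih (2 * J - 1) (by omega) (by rw [e1]; exact h)
    show gateOut (X (i + 1) J) (netY X U i (2 * J - 1)) (netY X U i (2 * J)) = true
    rw [hv, gateOut_t]

lemma Uhat_a (p q : ℕ) (c : GateState) (hq : 1 ≤ q) :
    Uhat p q c ((2 * q - 2) * 2 ^ (p - 1) + 1) = decide (c = GateState.YES) := by
  have hE : 0 < 2 ^ (p - 1) := Nat.pow_pos (by norm_num)
  unfold Uhat
  rw [show (2 * q - 2) * 2 ^ (p - 1) + 1 - 1 = (2 * q - 2) * 2 ^ (p - 1) by omega,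
    Nat.mul_div_cancel _ hE, Nat.mul_mod_left]
  rw [if_pos (by omega)]
  simp

lemma Uhat_b (p q : ℕ) (c : GateState) (hq : 1 ≤ q) :
    Uhat p q c ((2 * q - 1) * 2 ^ (p - 1) + 1) = true := by
  have hE : 0 < 2 ^ (p - 1) := Nat.pow_pos (by norm_num)
  unfold Uhat
  rw [show (2 * q - 1) * 2 ^ (p - 1) + 1 - 1 = (2 * q - 1) * 2 ^ (p - 1) by omega,
    Nat.mul_div_cancel _ hE, Nat.mul_mod_left]
  rw [if_neg (by omega), if_pos (by omega)]
  simp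

lemma Uhat_off (p q : ℕ) (c : GateState) (k : ℕ) (hk : 1 ≤ k)
    (h1 : k ≠ (2 * q - 2) * 2 ^ (p - 1) + 1)
    (h2 : k ≠ (2 * q - 1) * 2 ^ (p - 1) + 1) :
    Uhat p q c k = false := by
  have hE : 0 < 2 ^ (p - 1) := Nat.pow_pos (by norm_num)
  have hdm := Nat.div_add_mod (k - 1) (2 ^ (p - 1))
  unfold Uhat
  generalize hgD : (k - 1) / 2 ^ (p - 1) = D at hdm ⊢
  generalize hgM : (k - 1) % 2 ^ (p - 1) = M at hdm ⊢
  split_ifs with ha hb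
  · by_cases hmod : M = 0
    · exfalso
      apply h1
      have hDq : D = 2 * q - 2 := by omega
      rw [hDq, hmod, mul_comm] at hdm
      omega
    · simp [hmod]
  · by_cases hmod : M = 0
    · exfalso
      apply h2
      have hDq : D = 2 * q - 1 := by omega
      rw [hDq, hmod, mul_comm] at hdm
      omega
    · simp [hmod]
  · rfl

end S12
namespace S12

lemma sandwich (A B E : ℕ) (hE : 0 < E) (h1 : B * E ≤ A * E) (h2 : A * E < (B + 1) * E) :
    A = B := by
  have l1 : B ≤ A := Nat.le_of_mul_le_mul_right h1 hE
  have l2 : A < B + 1 := by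
    by_contra hc
    exact absurd (Nat.mul_le_mul_right E (by omega : B + 1 ≤ A)) (by omega)
  omega

lemma pow_split (i p : ℕ) (h1 : 1 ≤ i) (h2 : i ≤ p) :
    2 ^ (p - 1) = 2 ^ (p - i) * 2 ^ (i - 1) := by
  rw [← pow_add]
  congr 1
  omega

lemma nodeW_false (X : ℕ → ℕ → GateState) (p q : ℕ) (c : GateState) (i j : ℕ)
    (hp : 1 ≤ p) (hq : 1 ≤ q) (hi : 1 ≤ i) (hip : i ≤ p) (hj : 1 ≤ j)
    (hne : i = p → j ≠ q) :
    nodeW X (Uhat p q c) i j = false := by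
  have hE : 0 < 2 ^ (i - 1) := Nat.pow_pos (by norm_num)
  unfold nodeW
  apply netY_zero _ _ (i - 1) (2 * j) (by omega)
  intro k hk1 hk2
  have hps := pow_split i p hi hip
  apply Uhat_off p q c k (by omega)
  · -- k ≠ a
    intro hk
    rw [hk] at hk1 hk2
    rw [hps, ← mul_assoc] at hk1 hk2
    have hA : (2 * q - 2) * 2 ^ (p - i) = 2 * j - 1 := by
      apply sandwich _ _ (2 ^ (i - 1)) hE
      · omega
      · have : 2 * j - 1 + 1 = 2 * j := by omega
        rw [this]
        omega
    have h2q : 2 * q - 2 = 2 * (q - 1) := by omega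
    rw [h2q, mul_assoc] at hA
    omega
  · -- k ≠ b
    intro hk
    rw [hk] at hk1 hk2
    rw [hps, ← mul_assoc] at hk1 hk2
    have hA : (2 * q - 1) * 2 ^ (p - i) = 2 * j - 1 := by
      apply sandwich _ _ (2 ^ (i - 1)) hE
      · omega
      · have : 2 * j - 1 + 1 = 2 * j := by omega
        rw [this]
        omega
    rcases Nat.lt_or_ge i p with hlt | hge
    · have hsplit : 2 ^ (p - i) = 2 * 2 ^ (p - i - 1) := by
        rw [← pow_succ']
        congr 1
        omega
      rw [hsplit, show (2 * q - 1) * (2 * 2 ^ (p - i - 1)) = 2 * ((2 * q - 1) * 2 ^ (p - i - 1)) by ring] at hA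
      omega
    · have hieq : i = p := by omega
      rw [hieq] at hA
      simp at hA
      exact hne hieq (by omega)

lemma tgtW (X : ℕ → ℕ → GateState) (p q : ℕ) (c : GateState) (hp : 1 ≤ p) (hq : 1 ≤ q) :
    nodeW X (Uhat p q c) p q = true := by
  unfold nodeW
  apply netY_one _ _ (p - 1) (2 * q) (by omega)
  rw [show 2 * q - 1 = 2 * q - 1 from rfl]
  have : (2 * q - 1) * 2 ^ (p - 1) + 1 = (2 * q - 1) * 2 ^ (p - 1) + 1 := rfl
  exact Uhat_b p q c hq

lemma tgtV (X : ℕ → ℕ → GateState) (p q : ℕ) (c : GateState) (hp : 1 ≤ p) (hq : 1 ≤ q) :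
    nodeV X (Uhat p q c) p q = decide (c = GateState.YES) := by
  unfold nodeV
  cases c with
  | YES =>
    rw [netY_one _ _ (p - 1) (2 * q - 1) (by omega)
      (by rw [show 2 * q - 1 - 1 = 2 * q - 2 by omega]; exact Uhat_a p q _ hq)]
    simp
  | OR =>
    rw [netY_zero _ _ (p - 1) (2 * q - 1) (by omega) ?_]
    · simp
    · intro k hk1 hk2
      rw [show 2 * q - 1 - 1 = 2 * q - 2 by omega] at hk1
      by_cases hka : k = (2 * q - 2) * 2 ^ (p - 1) + 1
      · rw [hka, Uhat_a p q _ hq]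
        simp
      · apply Uhat_off p q _ k (by omega) hka
        omega

lemma zeroW (X : ℕ → ℕ → GateState) (i j : ℕ) (hj : 1 ≤ j) :
    nodeW X (fun _ => false) i j = false := by
  unfold nodeW
  exact netY_zero _ _ (i - 1) (2 * j) (by omega) (fun _ _ _ => rfl)

lemma netY_congr (m : ℕ) (X1 X2 : ℕ → ℕ → GateState) (U1 U2 : ℕ → Bool)
    (hX : ∀ a b, 1 ≤ a → a ≤ m → 1 ≤ b → b ≤ 2 ^ (m - a) → X1 a b = X2 a b)
    (hU : ∀ k, 1 ≤ k → k ≤ 2 ^ m → U1 k = U2 k) :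
    ∀ i, i ≤ m → ∀ j, 1 ≤ j → j ≤ 2 ^ (m - i) → netY X1 U1 i j = netY X2 U2 i j := by
  intro i
  induction i with
  | zero =>
    intro _ j h1 h2
    show U1 j = U2 j
    exact hU j h1 (by simpa using h2)
  | succ i ih =>
    intro him j h1 h2
    have hpow : 2 ^ (m - i) = 2 * 2 ^ (m - (i + 1)) := by
      rw [← pow_succ']
      congr 1
      omega
    show gateOut (X1 (i+1) j) (netY X1 U1 i (2*j-1)) (netY X1 U1 i (2*j))
       = gateOut (X2 (i+1) j) (netY X2 U2 i (2*j-1)) (netY X2 U2 i (2*j))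
    rw [hX (i+1) j (by omega) him h1 h2,
      ih (by omega) (2*j-1) (by omega) (by omega),
      ih (by omega) (2*j) (by omega) (by omega)]

end S12
namespace S12

lemma myIfCongr {α : Sort _} {P Q : Prop} {iP : Decidable P} {iQ : Decidable Q}
    {a b a' b' : α} (h : P ↔ Q) (ha : a = a') (hb : b = b') :
    (@ite _ P iP a b) = @ite _ Q iQ a' b' := by
  subst ha hb
  by_cases hP : P
  · rw [if_pos hP, if_pos (h.mp hP)]
  · rw [if_neg hP, if_neg (fun hq => hP (h.mpr hq))]

section Sim

variable (m s : ℕ) (Xbar Xstar : ℕ → ℕ → GateState)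

/-- layer of the node processed in phase `r` -/
def decI (r : ℕ) : ℕ := m - Nat.log 2 (2 ^ m - 1 - r)

/-- index of the node processed in phase `r` -/
def decJ (r : ℕ) : ℕ := (2 ^ m - 1 - r) + 1 - 2 ^ (m - decI m r)

/-- input chosen for phase `r`, given the state at the start of the phase -/
def chooseU (r : ℕ) (X0 : ℕ → ℕ → GateState) : ℕ → Bool :=
  if r < 2 ^ m - 1 then
    if X0 (decI m r) (decJ m r) = Xstar (decI m r) (decJ m r) then fun _ => false
    else Uhat (decI m r) (decJ m r) (X0 (decI m r) (decJ m r))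
  else fun _ => false

/-- the input at time `τ`, given the history `H` of states -/
def uOf (H : ℕ → ℕ → ℕ → GateState) (τ : ℕ) : ℕ → Bool :=
  chooseU m Xstar (τ / s) (H (τ / s * s))

open Classical in
/-- one step of the network update, given the history `H` -/
noncomputable def nextX (H : ℕ → ℕ → ℕ → GateState) (t : ℕ) : ℕ → ℕ → GateState :=
  fun i j =>
    if H (t + 1 - s) i j = GateState.YES ∧
        (∀ τ ∈ Finset.Icc (t + 1 - s) t,
          nodeV (H τ) (uOf m s Xstar H τ) i j = true ∧
          nodeW (H τ) (uOf m s Xstar H τ) i j = true) then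
      GateState.OR
    else if H (t + 1 - s) i j = GateState.OR ∧
        (∀ τ ∈ Finset.Icc (t + 1 - s) t,
          nodeV (H τ) (uOf m s Xstar H τ) i j = false ∧
          nodeW (H τ) (uOf m s Xstar H τ) i j = true) then
      GateState.YES
    else H t i j

/-- history of simulated states: `hist t τ` is the state at time `min τ t` -/
noncomputable def hist : ℕ → ℕ → ℕ → ℕ → GateState
  | 0 => fun _ => Xbar
  | t + 1 => fun τ =>
      if τ ≤ t then hist t τ else nextX m s Xstar (hist t) t

/-- the simulated state at time `t` -/
noncomputable def Xsim (t : ℕ) : ℕ → ℕ → GateState :=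
  hist m s Xbar Xstar t t

/-- the constructed input sequence -/
noncomputable def Useq (τ : ℕ) : ℕ → Bool :=
  uOf m s Xstar (Xsim m s Xbar Xstar) τ

lemma hist_le : ∀ t τ, τ ≤ t → hist m s Xbar Xstar t τ = Xsim m s Xbar Xstar τ := by
  intro t
  induction t with
  | zero =>
    intro τ hτ
    have : τ = 0 := by omega
    subst this
    rfl
  | succ t ih =>
    intro τ hτ
    rcases Nat.lt_or_ge τ (t + 1) with h | h
    · have : τ ≤ t := by omega
      show (if τ ≤ t then hist m s Xbar Xstar t τ else _) = _
      rw [if_pos this]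
      exact ih τ this
    · have : τ = t + 1 := by omega
      subst this
      rfl

lemma uOf_congr (H1 H2 : ℕ → ℕ → ℕ → GateState) (t : ℕ)
    (h : ∀ τ, τ ≤ t → H1 τ = H2 τ) (τ : ℕ) (hτ : τ ≤ t) :
    uOf m s Xstar H1 τ = uOf m s Xstar H2 τ := by
  unfold uOf
  rw [h (τ / s * s) (le_trans (Nat.div_mul_le_self τ s) hτ)]

lemma nextX_congr (hs : 1 ≤ s) (H1 H2 : ℕ → ℕ → ℕ → GateState) (t : ℕ)
    (h : ∀ τ, τ ≤ t → H1 τ = H2 τ) :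
    nextX m s Xstar H1 t = nextX m s Xstar H2 t := by
  funext i j
  unfold nextX
  have h1 : H1 (t + 1 - s) = H2 (t + 1 - s) := h _ (by omega)
  have h2 : H1 t = H2 t := h t le_rfl
  have h3 : ∀ τ ∈ Finset.Icc (t + 1 - s) t, H1 τ = H2 τ ∧
      uOf m s Xstar H1 τ = uOf m s Xstar H2 τ := by
    intro τ hτ
    rw [Finset.mem_Icc] at hτ
    exact ⟨h τ hτ.2, uOf_congr m s Xstar H1 H2 t h τ hτ.2⟩
  apply myIfCongr (and_congr (by rw [h1]) ?_) rfl
  · apply myIfCongr (and_congr (by rw [h1]) ?_) rfl (by rw [h2])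
    constructor <;> intro hh τ hτ <;> rcases h3 τ hτ with ⟨e1, e2⟩ <;>
      rcases hh τ hτ with ⟨f1, f2⟩
    · rw [← e1, ← e2]
      exact ⟨f1, f2⟩
    · rw [e1, e2]
      exact ⟨f1, f2⟩
  · constructor <;> intro hh τ hτ <;> rcases h3 τ hτ with ⟨e1, e2⟩ <;>
      rcases hh τ hτ with ⟨f1, f2⟩
    · rw [← e1, ← e2]
      exact ⟨f1, f2⟩
    · rw [e1, e2]
      exact ⟨f1, f2⟩

lemma Xsim_step (hs : 1 ≤ s) (t : ℕ) :
    Xsim m s Xbar Xstar (t + 1) = nextX m s Xstar (Xsim m s Xbar Xstar) t := by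
  show (if t + 1 ≤ t then _ else nextX m s Xstar (hist m s Xbar Xstar t) t) = _
  rw [if_neg (by omega)]
  exact nextX_congr m s Xstar hs _ _ t (fun τ hτ => hist_le m s Xbar Xstar t τ hτ)

end Sim

end S12
namespace S12

section Dyn

variable (m s : ℕ) (Xbar Xstar : ℕ → ℕ → GateState)

lemma freeze (hs : 1 ≤ s) (i j t0 : ℕ) :
    ∀ d : ℕ,
      (∀ τ, t0 ≤ τ → τ < t0 + d →
        nodeW (Xsim m s Xbar Xstar τ)
          (uOf m s Xstar (Xsim m s Xbar Xstar) τ) i j = false) →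
      Xsim m s Xbar Xstar (t0 + d) i j = Xsim m s Xbar Xstar t0 i j := by
  intro d
  induction d with
  | zero => intro _; rfl
  | succ d ih =>
    intro h
    rw [show t0 + (d + 1) = (t0 + d) + 1 by omega, Xsim_step m s Xbar Xstar hs]
    simp only [nextX]
    have hmem : (t0 + d) ∈ Finset.Icc (t0 + d + 1 - s) (t0 + d) := by
      rw [Finset.mem_Icc]; omega
    have hw : nodeW (Xsim m s Xbar Xstar (t0 + d))
        (uOf m s Xstar (Xsim m s Xbar Xstar) (t0 + d)) i j = false :=
      h _ (by omega) (by omega)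
    rw [if_neg, if_neg]
    · exact ih (fun τ h1 h2 => h τ h1 (by omega))
    · rintro ⟨-, hall⟩
      have hcon := (hall _ hmem).2
      rw [hw] at hcon
      exact Bool.noConfusion hcon
    · rintro ⟨-, hall⟩
      have hcon := (hall _ hmem).2
      rw [hw] at hcon
      exact Bool.noConfusion hcon

lemma flip_yes (hs : 1 ≤ s) (p q T0 : ℕ)
    (hC : Xsim m s Xbar Xstar T0 p q = GateState.YES)
    (h : ∀ τ, T0 ≤ τ → τ < T0 + s →
      nodeV (Xsim m s Xbar Xstar τ) (uOf m s Xstar (Xsim m s Xbar Xstar) τ) p q = true ∧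
      nodeW (Xsim m s Xbar Xstar τ) (uOf m s Xstar (Xsim m s Xbar Xstar) τ) p q = true) :
    Xsim m s Xbar Xstar (T0 + s) p q = GateState.OR := by
  rw [show T0 + s = (T0 + s - 1) + 1 by omega, Xsim_step m s Xbar Xstar hs]
  simp only [nextX]
  rw [show T0 + s - 1 + 1 - s = T0 by omega]
  rw [if_pos ⟨hC, fun τ hτ => by
    rw [Finset.mem_Icc] at hτ
    exact h τ hτ.1 (by omega)⟩]

lemma flip_or (hs : 1 ≤ s) (p q T0 : ℕ)
    (hC : Xsim m s Xbar Xstar T0 p q = GateState.OR)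
    (h : ∀ τ, T0 ≤ τ → τ < T0 + s →
      nodeV (Xsim m s Xbar Xstar τ) (uOf m s Xstar (Xsim m s Xbar Xstar) τ) p q = false ∧
      nodeW (Xsim m s Xbar Xstar τ) (uOf m s Xstar (Xsim m s Xbar Xstar) τ) p q = true) :
    Xsim m s Xbar Xstar (T0 + s) p q = GateState.YES := by
  rw [show T0 + s = (T0 + s - 1) + 1 by omega, Xsim_step m s Xbar Xstar hs]
  simp only [nextX]
  rw [show T0 + s - 1 + 1 - s = T0 by omega]
  rw [if_neg, if_pos ⟨hC, fun τ hτ => by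
    rw [Finset.mem_Icc] at hτ
    exact h τ hτ.1 (by omega)⟩]
  rintro ⟨h1, -⟩
  rw [hC] at h1
  exact GateState.noConfusion h1

lemma useq_phase (hs : 1 ≤ s) (r τ : ℕ) (h1 : r * s ≤ τ) (h2 : τ < r * s + s) :
    uOf m s Xstar (Xsim m s Xbar Xstar) τ
      = chooseU m Xstar r (Xsim m s Xbar Xstar (r * s)) := by
  unfold uOf
  rw [Nat.div_eq_of_lt_le h1 (by rw [add_mul, one_mul]; omega)]

lemma phases (hm : 1 ≤ m) (hs : 1 ≤ s) :
    ∀ r, r ≤ 2 ^ m - 1 →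
      ∀ i j, 1 ≤ i → i ≤ m → 1 ≤ j → j ≤ 2 ^ (m - i) →
        2 ^ m - r ≤ 2 ^ (m - i) + j - 1 →
        Xsim m s Xbar Xstar (r * s) i j = Xstar i j := by
  intro r
  induction r with
  | zero =>
    intro _ i j hi1 him hj1 hjm hcode
    exfalso
    have e1 : (1:ℕ) ≤ 2 ^ (m - i) := Nat.one_le_two_pow
    have e2 : 2 ^ (m - i) * 2 ≤ 2 ^ m := by
      rw [← pow_succ]
      exact Nat.pow_le_pow_right (by norm_num) (by omega)
    omega
  | succ r ih =>
    intro hr i j hi1 him hj1 hjm hcode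
    have hrlt : r < 2 ^ m - 1 := by omega
    have hpow1 : (1:ℕ) ≤ 2 ^ m := Nat.one_le_two_pow
    set c0 : ℕ := 2 ^ m - 1 - r with hc0
    have hc01 : 1 ≤ c0 := by omega
    have hc0m : c0 < 2 ^ m := by omega
    set L : ℕ := Nat.log 2 c0 with hLdef
    have hL1 : 2 ^ L ≤ c0 := Nat.pow_log_le_self 2 (by omega)
    have hL2 : c0 < 2 ^ (L + 1) := Nat.lt_pow_succ_log_self (by norm_num) c0
    have hLm : L < m := by
      by_contra hcon
      exact absurd (Nat.pow_le_pow_right (by norm_num : 1 ≤ 2) (by omega : m ≤ L))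
        (by omega)
    have h2L : 2 ^ (L + 1) = 2 * 2 ^ L := by rw [pow_succ]; ring
    set p : ℕ := decI m r with hpdef
    set q : ℕ := decJ m r with hqdef
    have hpL : p = m - L := by rw [hpdef]; unfold decI; rw [← hc0, ← hLdef]
    have hmL : m - p = L := by omega
    have hp1 : 1 ≤ p := by omega
    have hpm : p ≤ m := by omega
    have hqval : q = c0 + 1 - 2 ^ L := by
      rw [hqdef]; unfold decJ; rw [← hc0, ← hpdef, hmL]
    have hq1 : 1 ≤ q := by omega
    have hq2 : q ≤ 2 ^ L := by omega
    have hcode0 : 2 ^ (m - p) + q - 1 = c0 := by rw [hmL]; omega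
    -- node (i,j) bracket
    have hcodeL : 2 ^ (m - i) ≤ 2 ^ (m - i) + j - 1 := by omega
    have hcodeH : 2 ^ (m - i) + j - 1 < 2 ^ (m - i) * 2 := by omega
    have hc0code : c0 ≤ 2 ^ (m - i) + j - 1 := by omega
    have hmul : (r + 1) * s = r * s + s := by ring
    rw [hmul]
    -- phase input
    have hUphase : ∀ τ, r * s ≤ τ → τ < r * s + s →
        uOf m s Xstar (Xsim m s Xbar Xstar) τ
          = chooseU m Xstar r (Xsim m s Xbar Xstar (r * s)) :=
      fun τ a b => useq_phase m s Xbar Xstar hs r τ a b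
    have hchoose : chooseU m Xstar r (Xsim m s Xbar Xstar (r * s))
        = if Xsim m s Xbar Xstar (r * s) p q = Xstar p q then (fun _ => false)
          else Uhat p q (Xsim m s Xbar Xstar (r * s) p q) := by
      unfold chooseU
      rw [if_pos hrlt, ← hpdef, ← hqdef]
    -- identification of (i,j) with (p,q) in the equality case
    have hident : c0 = 2 ^ (m - i) + j - 1 → i = p ∧ j = q := by
      intro heq
      have hLi : Nat.log 2 (2 ^ (m - i) + j - 1) = m - i :=
        Nat.log_eq_of_pow_le_of_lt_pow hcodeL (by rw [pow_succ]; omega)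
      have hLeq : L = m - i := by rw [hLdef, heq, hLi]
      have hieq : i = p := by omega
      refine ⟨hieq, ?_⟩
      rw [← hieq] at hcode0
      omega
    by_cases hcx : Xsim m s Xbar Xstar (r * s) p q = Xstar p q
    · -- zero phase: everything frozen
      have hfr : Xsim m s Xbar Xstar (r * s + s) i j
          = Xsim m s Xbar Xstar (r * s) i j := by
        apply freeze m s Xbar Xstar hs i j (r * s) s
        intro τ a b
        rw [hUphase τ a b, hchoose, if_pos hcx]
        exact zeroW _ i j hj1
      rw [hfr]
      rcases Nat.eq_or_lt_of_le hc0code with heq | hlt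
      · rcases hident heq with ⟨e1, e2⟩
        rw [e1, e2]
        exact hcx
      · exact ih (by omega) i j hi1 him hj1 hjm (by omega)
    · -- training phase with Uhat
      have hUu : ∀ τ, r * s ≤ τ → τ < r * s + s →
          uOf m s Xstar (Xsim m s Xbar Xstar) τ
            = Uhat p q (Xsim m s Xbar Xstar (r * s) p q) := by
        intro τ a b
        rw [hUphase τ a b, hchoose, if_neg hcx]
      rcases Nat.eq_or_lt_of_le hc0code with heq | hlt
      · -- this is the target node: flip it
        rcases hident heq with ⟨e1, e2⟩
        rw [e1, e2]
        rcases hC : Xsim m s Xbar Xstar (r * s) p q with _ | _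
        · -- current state YES, target must be OR
          have hstar : Xstar p q = GateState.OR := by
            rcases hstar' : Xstar p q with _ | _
            · exact absurd (hC.trans hstar'.symm) hcx
            · rfl
          rw [hstar]
          apply flip_yes m s Xbar Xstar hs p q (r * s) hC
          intro τ a b
          rw [hUu τ a b, hC]
          constructor
          · rw [tgtV _ p q _ hp1 hq1]
            simp
          · exact tgtW _ p q _ hp1 hq1
        · have hstar : Xstar p q = GateState.YES := by
            rcases hstar' : Xstar p q with _ | _
            · rfl
            · exact absurd (hC.trans hstar'.symm) hcx
          rw [hstar]
          apply flip_or m s Xbar Xstar hs p q (r * s) hC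
          intro τ a b
          rw [hUu τ a b, hC]
          constructor
          · rw [tgtV _ p q _ hp1 hq1]
            simp
          · exact tgtW _ p q _ hp1 hq1
      · -- an already-set node: frozen during this phase
        have hip : i ≤ p := by
          by_contra hcon
          have h1 : 2 ^ (m - i) * 2 ≤ 2 ^ (m - p) := by
            rw [← pow_succ]
            exact Nat.pow_le_pow_right (by norm_num) (by omega)
          omega
        have hne : i = p → j ≠ q := by
          intro hipe hjq
          rw [hipe, hjq] at hlt
          omega
        have hfr : Xsim m s Xbar Xstar (r * s + s) i j
            = Xsim m s Xbar Xstar (r * s) i j := by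
          apply freeze m s Xbar Xstar hs i j (r * s) s
          intro τ a b
          rw [hUu τ a b]
          exact nodeW_false _ p q _ i j hp1 hq1 hi1 hip hj1 hne
        rw [hfr]
        exact ih (by omega) i j hi1 him hj1 hjm (by omega)

end Dyn

end S12
namespace S12

lemma determinism (m s : ℕ) (Xbar Xstar : ℕ → ℕ → GateState) (hs : 1 ≤ s)
    (U : ℕ → ℕ → Bool) (X : ℕ → ℕ → ℕ → GateState) (T : ℕ)
    (hTraj : NetTraj m s U X)
    (h0 : ∀ i j, 1 ≤ i → i ≤ m → 1 ≤ j → j ≤ 2 ^ (m - i) → X 0 i j = Xbar i j)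
    (hU : ∀ τ, τ < T → ∀ k, 1 ≤ k → k ≤ 2 ^ m →
      U τ k = Useq m s Xbar Xstar τ k) :
    ∀ t, t ≤ T → ∀ i j, 1 ≤ i → i ≤ m → 1 ≤ j → j ≤ 2 ^ (m - i) →
      X t i j = Xsim m s Xbar Xstar t i j := by
  intro t
  induction t using Nat.strong_induction_on with
  | _ t ih =>
    intro htT i j hi1 him hj1 hjm
    cases t with
    | zero =>
      rw [h0 i j hi1 him hj1 hjm]
      rfl
    | succ t =>
      rw [hTraj i j hi1 him hj1 hjm t, Xsim_step m s Xbar Xstar hs t]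
      simp only [nextX]
      have hx1 : X (t + 1 - s) i j = Xsim m s Xbar Xstar (t + 1 - s) i j :=
        ih (t + 1 - s) (by omega) (by omega) i j hi1 him hj1 hjm
      have hx2 : X t i j = Xsim m s Xbar Xstar t i j :=
        ih t (by omega) (by omega) i j hi1 him hj1 hjm
      have hpow : 2 ^ (m - (i - 1)) = 2 * 2 ^ (m - i) := by
        rw [← pow_succ']
        congr 1
        omega
      have hVW : ∀ τ ∈ Finset.Icc (t + 1 - s) t,
          nodeV (X τ) (U τ) i j
            = nodeV (Xsim m s Xbar Xstar τ) (uOf m s Xstar (Xsim m s Xbar Xstar) τ) i j ∧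
          nodeW (X τ) (U τ) i j
            = nodeW (Xsim m s Xbar Xstar τ) (uOf m s Xstar (Xsim m s Xbar Xstar) τ) i j := by
        intro τ hτ
        rw [Finset.mem_Icc] at hτ
        have hXeq : ∀ a b, 1 ≤ a → a ≤ m → 1 ≤ b → b ≤ 2 ^ (m - a) →
            X τ a b = Xsim m s Xbar Xstar τ a b :=
          fun a b h1 h2 h3 h4 => ih τ (by omega) (by omega) a b h1 h2 h3 h4
        have hUeq : ∀ k, 1 ≤ k → k ≤ 2 ^ m →
            U τ k = uOf m s Xstar (Xsim m s Xbar Xstar) τ k :=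
          fun k h1 h2 => hU τ (by omega) k h1 h2
        constructor
        · exact netY_congr m _ _ _ _ hXeq hUeq (i - 1) (by omega) (2 * j - 1)
            (by omega) (by omega)
        · exact netY_congr m _ _ _ _ hXeq hUeq (i - 1) (by omega) (2 * j)
            (by omega) (by omega)
      apply myIfCongr (and_congr (by rw [hx1]) ?_) rfl
      · apply myIfCongr (and_congr (by rw [hx1]) ?_) rfl (by rw [hx2])
        constructor <;> intro hh τ hτ <;> rcases hVW τ hτ with ⟨e1, e2⟩ <;>
          rcases hh τ hτ with ⟨f1, f2⟩
        · rw [← e1, ← e2]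
          exact ⟨f1, f2⟩
        · rw [e1, e2]
          exact ⟨f1, f2⟩
      · constructor <;> intro hh τ hτ <;> rcases hVW τ hτ with ⟨e1, e2⟩ <;>
          rcases hh τ hτ with ⟨f1, f2⟩
        · rw [← e1, ← e2]
          exact ⟨f1, f2⟩
        · rw [e1, e2]
          exact ⟨f1, f2⟩

end S12

/-- for the network `Σ(m)` with unit training time `s ≥ 1`
and arbitrary initial state `X̄`, for every target state `X*` there exist a
time `T ≤ n·s` (with `n = 2^m - 1` the number of nodes) and an input sequence
`(U(0), …, U(T-1))` steering the state of the network from `X̄` to `X*`: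
any network trajectory starting at `X̄` and driven by that input sequence
satisfies `X(T) = X*`. -/
theorem stmt12 (m s : ℕ) (hm : 1 ≤ m) (hs : 1 ≤ s)
    (Xbar Xstar : ℕ → ℕ → GateState) :
    ∃ T : ℕ, T ≤ (2 ^ m - 1) * s ∧
      ∃ Useq : ℕ → ℕ → Bool,
        ∀ (U : ℕ → ℕ → Bool) (X : ℕ → ℕ → ℕ → GateState),
          NetTraj m s U X →
          (∀ i j : ℕ, 1 ≤ i → i ≤ m → 1 ≤ j → j ≤ 2 ^ (m - i) →
            X 0 i j = Xbar i j) →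
          (∀ τ : ℕ, τ < T → ∀ k : ℕ, 1 ≤ k → k ≤ 2 ^ m → U τ k = Useq τ k) →
          ∀ i j : ℕ, 1 ≤ i → i ≤ m → 1 ≤ j → j ≤ 2 ^ (m - i) →
            X T i j = Xstar i j := by
  refine ⟨(2 ^ m - 1) * s, le_rfl, S12.Useq m s Xbar Xstar, ?_⟩
  intro U X hTraj h0 hU i j hi1 him hj1 hjm
  rw [S12.determinism m s Xbar Xstar hs U X ((2 ^ m - 1) * s) hTraj h0 hU
    ((2 ^ m - 1) * s) le_rfl i j hi1 him hj1 hjm]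
  exact S12.phases m s Xbar Xstar hm hs (2 ^ m - 1) le_rfl i j hi1 him hj1 hjm (by
    have e1 : (1:ℕ) ≤ 2 ^ (m - i) := Nat.one_le_two_pow
    have e2 : (1:ℕ) ≤ 2 ^ m := Nat.one_le_two_pow
    omega)
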